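/- If L is an extremal lattice and L' is a lattice quotient of L, then L' is extremal. -/

import Mathlib

open scoped Classical

/-- A finite lattice is *extremal* if its length `n` equals its number of
join-irreducible elements and its number of meet-irreducible elements. -/
def IsExtremalLattice (L : Type*) [Lattice L] [Fintype L] : Prop :=
  ∃ n : ℕ, (∃ c : Fin (n + 1) → L, StrictMono c) ∧
    (∀ (m : ℕ) (c : Fin (m + 1) → L), StrictMono c → m ≤ n) ∧
    Nat.card {a : L // SupIrred a} = n ∧ Nat.card {a : L // InfIrred a} = n

section Aux

open Function

/-- In a finite lattice, whenever `x < y` there is a sup-irreducible element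
below `y` but not below `x`. -/
lemma exists_supIrred_not_le {M : Type*} [Lattice M] [Finite M] :
    ∀ {y x : M}, x < y → ∃ a, SupIrred a ∧ a ≤ y ∧ ¬ a ≤ x := by
  intro y
  induction y using WellFoundedLT.induction with
  | _ y ih =>
    intro x hxy
    by_cases hy : SupIrred y
    · exact ⟨y, hy, le_rfl, fun h => absurd (h.trans_lt hxy) (lt_irrefl _)⟩
    · rw [not_supIrred] at hy
      rcases hy with hy | ⟨b, d, hbd, hb, hd⟩
      · exact absurd (hy hxy.le) hxy.not_ge
      · by_cases hbx : b ≤ x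
        · have hdx : ¬ d ≤ x := fun hdx => hxy.not_ge (hbd ▸ sup_le hbx hdx)
          have hxd : x ⊓ d < d :=
            lt_of_le_of_ne inf_le_right (fun h => hdx (h ▸ inf_le_left))
          obtain ⟨a, ha, h1, h2⟩ := ih d hd hxd
          exact ⟨a, ha, h1.trans (le_trans le_sup_right hbd.le),
            fun h => h2 (le_inf h h1)⟩
        · have hxb : x ⊓ b < b :=
            lt_of_le_of_ne inf_le_right (fun h => hbx (h ▸ inf_le_left))
          obtain ⟨a, ha, h1, h2⟩ := ih b hb hxb
          exact ⟨a, ha, h1.trans (hbd ▸ le_sup_left : b ≤ y),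
            fun h => h2 (le_inf h h1)⟩

/-- Given a weakly increasing sequence which is strict on `[0, n]`, we can pick,
for each step, a sup-irreducible element witnessing the step; the resulting
family is injective. -/
lemma exists_supIrred_steps {M : Type*} [Lattice M] [Finite M] (n : ℕ) (g : ℕ → M)
    (hmono : Monotone g) (hstrict : ∀ i, i < n → g i < g (i + 1)) :
    ∃ j : Fin n → M, (∀ i, SupIrred (j i)) ∧ (∀ i : Fin n, j i ≤ g ((i : ℕ) + 1)) ∧
      (∀ i : Fin n, ¬ j i ≤ g i) ∧ Function.Injective j := by
  choose j hj1 hj2 hj3 using fun i : Fin n => exists_supIrred_not_le (hstrict i i.isLt)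
  refine ⟨j, hj1, hj2, hj3, ?_⟩
  intro i i' h
  by_contra hne
  rcases Ne.lt_or_gt hne with hlt | hlt
  · have hle : ((i : ℕ) + 1) ≤ (i' : ℕ) := hlt
    have : j i ≤ g i' := (hj2 i).trans (hmono hle)
    exact hj3 i' (h ▸ this)
  · have hle : ((i' : ℕ) + 1) ≤ (i : ℕ) := hlt
    have : j i' ≤ g i := (hj2 i').trans (hmono hle)
    exact hj3 i (h.symm ▸ this)

/-- Any strict chain of length `m` in a finite lattice gives `m` distinct
sup-irreducible elements. -/
lemma chain_le_card_supIrred {M : Type*} [Lattice M] [Fintype M] (m : ℕ)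
    (c : Fin (m + 1) → M) (hc : StrictMono c) :
    m ≤ Nat.card {a : M // SupIrred a} := by
  set g : ℕ → M := fun t => c ⟨min t m, by omega⟩ with hg
  have hmono : Monotone g := by
    intro a b hab
    exact hc.monotone (by simp [Fin.le_def]; omega)
  have hstrict : ∀ i, i < m → g i < g (i + 1) := by
    intro i hi
    apply hc
    simp [Fin.lt_def]
    omega
  obtain ⟨j, hj1, _, _, hjinj⟩ := exists_supIrred_steps m g hmono hstrict
  have hinj : Function.Injective (fun i : Fin m => (⟨j i, hj1 i⟩ : {a : M // SupIrred a})) := by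
    intro a b h
    exact hjinj (congrArg Subtype.val h)
  simpa using Nat.card_le_card_of_injective _ hinj

lemma card_supIrred_dual (M : Type*) [Lattice M] :
    Nat.card {a : Mᵒᵈ // SupIrred a} = Nat.card {a : M // InfIrred a} :=
  Nat.card_congr (Equiv.subtypeEquiv OrderDual.ofDual (fun _ => infIrred_ofDual.symm))

lemma chain_le_card_infIrred {M : Type*} [Lattice M] [Fintype M] (m : ℕ)
    (c : Fin (m + 1) → M) (hc : StrictMono c) :
    m ≤ Nat.card {a : M // InfIrred a} := by
  rw [← card_supIrred_dual]
  refine chain_le_card_supIrred m (fun i => OrderDual.toDual (c i.rev)) ?_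
  intro i i' h
  exact hc (Fin.rev_lt_rev.mpr h)

/-- From a weakly increasing sequence we extract a strict chain whose length is
the number of strict steps in `[0, N]`. -/
lemma exists_chain_of_steps {P : Type*} [PartialOrder P] (g : ℕ → P) (hg : Monotone g) :
    ∀ N k : ℕ, ((Finset.range N).filter fun i => g i ≠ g (i + 1)).card = k →
      ∃ c : Fin (k + 1) → P, StrictMono c ∧ c (Fin.last k) = g N := by
  intro N
  induction N with
  | zero =>
    intro k hk
    simp at hk
    subst hk
    exact ⟨fun _ => g 0, fun a b h => absurd (Fin.lt_def.mp h) (by omega), rfl⟩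
  | succ N ih =>
    intro k hk
    rw [Finset.range_add_one, Finset.filter_insert] at hk
    by_cases h : g N = g (N + 1)
    · rw [if_neg (by simpa using h)] at hk
      obtain ⟨c, hc, hlast⟩ := ih k hk
      exact ⟨c, hc, hlast.trans h⟩
    · rw [if_pos h, Finset.card_insert_of_notMem (by simp)] at hk
      obtain ⟨k₀, rfl⟩ : ∃ k₀, k = k₀ + 1 := ⟨_, hk.symm⟩
      obtain ⟨c, hc, hlast⟩ := ih k₀ (Nat.succ_injective hk)
      have hNlt : g N < g (N + 1) := (hg (Nat.le_succ N)).lt_of_ne h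
      refine ⟨Fin.snoc c (g (N + 1)), ?_, by simp⟩
      intro a b hab
      rcases Fin.eq_castSucc_or_eq_last b with ⟨b', rfl⟩ | rfl
      · rcases Fin.eq_castSucc_or_eq_last a with ⟨a', rfl⟩ | rfl
        · rw [Fin.snoc_castSucc, Fin.snoc_castSucc]
          exact hc (by simpa using hab)
        · exact absurd hab (by simp only [Fin.lt_def, Fin.val_last, Fin.coe_castSucc]; omega)
      · rcases Fin.eq_castSucc_or_eq_last a with ⟨a', rfl⟩ | rfl
        · rw [Fin.snoc_castSucc, Fin.snoc_last]
          calc c a' ≤ c (Fin.last k₀) := hc.monotone (Fin.le_last a')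
            _ = g N := hlast
            _ < g (N + 1) := hNlt
        · exact absurd hab (lt_irrefl _)

/-- Every fibre of a surjection out of a finite lattice has a minimum. -/
lemma fiber_exists_min {L L' : Type*} [Lattice L] [Fintype L] [Lattice L']
    (f : LatticeHom L L') (a' : L') (h : ∃ x, f x = a') :
    ∃ m : L, f m = a' ∧ ∀ x, f x = a' → m ≤ x := by
  set S : Finset L := Finset.univ.filter (fun x => f x = a') with hS
  have hSne : S.Nonempty := by
    obtain ⟨x, hx⟩ := h
    exact ⟨x, by simp [hS, hx]⟩
  have hmem : S.inf' hSne id ∈ {x : L | f x = a'} := by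
    apply Finset.inf'_mem
    · intro x hx y hy
      simp only [Set.mem_setOf_eq] at hx hy ⊢
      rw [map_inf, hx, hy, inf_idem]
    · intro i hi
      simpa [hS] using hi
  refine ⟨S.inf' hSne id, hmem, ?_⟩
  intro x hx
  exact Finset.inf'_le id (by simp [hS, hx])

/-- The minimum of the fibre of a sup-irreducible element is sup-irreducible. -/
lemma supIrred_fiber_min {L L' : Type*} [Lattice L] [Lattice L']
    (f : LatticeHom L L') (hf : Function.Surjective f) {a' : L'} (ha' : SupIrred a')
    {m : L} (hm : f m = a') (hmin : ∀ x, f x = a' → m ≤ x) : SupIrred m := by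
  constructor
  · intro hmm
    apply ha'.1
    intro b' hb'
    obtain ⟨b, rfl⟩ := hf b'
    have h1 : m ≤ b ⊓ m := hmm inf_le_right
    have h2 : f m ≤ f (b ⊓ m) := OrderHomClass.monotone f h1
    rw [map_inf, hm] at h2
    exact le_trans h2 (le_trans inf_le_left le_rfl)
  · intro b c hbc
    have : f b ⊔ f c = a' := by rw [← map_sup, hbc, hm]
    rcases ha'.2 this with h | h
    · exact Or.inl (le_antisymm (hbc ▸ le_sup_left) (hmin b h))
    · exact Or.inr (le_antisymm (hbc ▸ le_sup_right) (hmin c h))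

/-- Key counting lemma: the number of sup-irreducibles of the quotient is at most
the number of non-collapsed steps of a maximal chain of `L`. -/
lemma key_le {L L' : Type*} [Lattice L] [Fintype L] [Lattice L'] [Fintype L']
    (f : LatticeHom L L') (hf : Function.Surjective f) (n : ℕ) (g : ℕ → L)
    (hmono : Monotone g) (hstrict : ∀ i, i < n → g i < g (i + 1))
    (hcard : Nat.card {a : L // SupIrred a} = n) :
    Nat.card {a : L' // SupIrred a} ≤
      ((Finset.range n).filter fun i => f (g i) ≠ f (g (i + 1))).card := by
  obtain ⟨j, hj1, hj2, hj3, hjinj⟩ := exists_supIrred_steps n g hmono hstrict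
  set J : Fin n → {a : L // SupIrred a} := fun i => ⟨j i, hj1 i⟩ with hJ
  have hJinj : Function.Injective J := fun i i' h => hjinj (congrArg Subtype.val h)
  have hJbij : Function.Bijective J :=
    (Nat.bijective_iff_injective_and_card J).2 ⟨hJinj, by rw [hcard]; simp⟩
  set T := (Finset.range n).filter (fun i => f (g i) ≠ f (g (i + 1))) with hT
  have hkey : ∀ a' : {a : L' // SupIrred a}, ∃ i : Fin n, (i : ℕ) ∈ T ∧ f (j i) = a'.1 := by
    rintro ⟨a', ha'⟩
    obtain ⟨m, hm, hmin⟩ := fiber_exists_min f a' (hf a')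
    have hsm : SupIrred m := supIrred_fiber_min f hf ha' hm hmin
    obtain ⟨i, hi⟩ := hJbij.2 ⟨m, hsm⟩
    have hji : j i = m := congrArg Subtype.val hi
    refine ⟨i, ?_, by rw [hji, hm]⟩
    simp only [hT, Finset.mem_filter, Finset.mem_range]
    refine ⟨i.isLt, fun hcol => ?_⟩
    have h1 : f (m ⊓ g i) = a' := by
      calc f (m ⊓ g i) = f m ⊓ f (g i) := map_inf f _ _
        _ = f m ⊓ f (g ((i : ℕ) + 1)) := by rw [hcol]
        _ = f (m ⊓ g ((i : ℕ) + 1)) := (map_inf f _ _).symm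
        _ = f m := by rw [inf_eq_left.2 (hji ▸ hj2 i)]
        _ = a' := hm
    have h2 : m ≤ m ⊓ g i := hmin _ h1
    exact hj3 i (hji ▸ (h2.trans inf_le_right))
  choose Φ hΦT hΦf using hkey
  have hinj : Function.Injective (fun a' => (⟨(Φ a' : ℕ), hΦT a'⟩ : {x // x ∈ T})) := by
    intro a b h
    have hv : (Φ a : ℕ) = (Φ b : ℕ) := congrArg Subtype.val h
    have hab : Φ a = Φ b := Fin.ext hv
    apply Subtype.ext
    rw [← hΦf a, ← hΦf b, hab]
  calc Nat.card {a : L' // SupIrred a} ≤ Nat.card {x // x ∈ T} :=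
        Nat.card_le_card_of_injective _ hinj
    _ = T.card := Nat.card_eq_finsetCard T

end Aux

/-- Extremal lattices are preserved under lattice quotients (a lattice quotient
of `L` is the image of a surjective lattice homomorphism out of `L`). -/
theorem isExtremalLattice_of_quotient {L L' : Type*} [Lattice L] [Fintype L]
    [Lattice L'] [Fintype L'] (f : LatticeHom L L') (hf : Function.Surjective f)
    (hL : IsExtremalLattice L) : IsExtremalLattice L' := by
  obtain ⟨n, ⟨c, hc⟩, hmax, hs, hi⟩ := hL
  set g : ℕ → L := fun t => c ⟨min t n, by omega⟩ with hg
  have hmono : Monotone g := by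
    intro a b hab
    exact hc.monotone (by simp [Fin.le_def]; omega)
  have hstrict : ∀ i, i < n → g i < g (i + 1) := by
    intro i hi'
    apply hc
    simp [Fin.lt_def]
    omega
  set T := (Finset.range n).filter (fun i => f (g i) ≠ f (g (i + 1))) with hT
  set k := T.card with hk
  -- upper bound on sup-irreducibles of L'
  have hsup_le : Nat.card {a : L' // SupIrred a} ≤ k :=
    key_le f hf n g hmono hstrict hs
  -- upper bound on inf-irreducibles of L', by duality
  have hinf_le : Nat.card {a : L' // InfIrred a} ≤ k := by
    have hfd : Function.Surjective (LatticeHom.dual f) := by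
      intro a
      obtain ⟨x, hx⟩ := hf (OrderDual.ofDual a)
      exact ⟨OrderDual.toDual x, congrArg OrderDual.toDual hx⟩
    have hmono' : Monotone (fun t => OrderDual.toDual (g (n - t))) := by
      intro a b hab
      exact OrderDual.toDual_le_toDual.mpr (hmono (by omega))
    have hstrict' : ∀ i, i < n →
        (fun t => OrderDual.toDual (g (n - t))) i <
          (fun t => OrderDual.toDual (g (n - t))) (i + 1) := by
      intro i hi'
      apply OrderDual.toDual_lt_toDual.mpr
      have := hstrict (n - (i + 1)) (by omega)
      have he : n - (i + 1) + 1 = n - i := by omega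
      rw [he] at this
      exact this
    have hcard' : Nat.card {a : Lᵒᵈ // SupIrred a} = n := by
      rw [card_supIrred_dual]; exact hi
    have h2 := key_le (LatticeHom.dual f) hfd n _ hmono' hstrict' hcard'
    rw [card_supIrred_dual] at h2
    refine h2.trans ?_
    refine Finset.card_le_card_of_injOn (fun i => n - 1 - i) ?_ ?_
    · intro i hi''
      simp only [Finset.mem_coe, Finset.mem_filter, Finset.mem_range] at hi''
      obtain ⟨hi1, hi2⟩ := hi''
      have hne : f (g (n - 1 - i)) ≠ f (g (n - 1 - i + 1)) := by
        have he1 : n - 1 - i = n - (i + 1) := by omega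
        have he2 : n - 1 - i + 1 = n - i := by omega
        rw [he2, he1]
        intro hcon
        exact hi2 (congrArg OrderDual.toDual hcon.symm)
      rw [hT]
      exact Finset.mem_filter.mpr ⟨Finset.mem_range.mpr (by show n - 1 - i < n; omega), hne⟩
    · intro a ha b hb hab
      have ha' : a < n :=
        Finset.mem_range.mp (Finset.mem_of_mem_filter a (Finset.mem_coe.mp ha))
      have hb' : b < n :=
        Finset.mem_range.mp (Finset.mem_of_mem_filter b (Finset.mem_coe.mp hb))
      have hab' : n - 1 - a = n - 1 - b := hab
      omega
  -- a chain of length k in L'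
  have hGmono : Monotone (fun t => f (g t)) := fun a b hab =>
    OrderHomClass.monotone f (hmono hab)
  obtain ⟨c', hc', -⟩ := exists_chain_of_steps (fun t => f (g t)) hGmono n k hk.symm
  -- lower bounds
  have hsup_ge : k ≤ Nat.card {a : L' // SupIrred a} := chain_le_card_supIrred k c' hc'
  have hinf_ge : k ≤ Nat.card {a : L' // InfIrred a} := chain_le_card_infIrred k c' hc'
  refine ⟨k, ⟨c', hc'⟩, ?_, le_antisymm hsup_le hsup_ge, le_antisymm hinf_le hinf_ge⟩
  intro m cm hcm
  exact (chain_le_card_supIrred m cm hcm).trans hsup_le
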